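/- (Theorem 2.) A positive probability vector π on cells i : Fin T → Fin r satisfies complete symmetry (S) if and only if π satisfies both the OQS[f] model and the marginal moment equality (ME) model. -/
import Mathlib


/-- The orbit `A(i)` of a cell `i : Fin T → Fin r` under the action of the
symmetric group on `Fin T` permuting coordinates (`σ · i = i ∘ σ`). -/
def cellOrbit (r T : ℕ) (i : Fin T → Fin r) : Finset (Fin T → Fin r) :=
  Finset.univ.filter (fun j => ∃ σ : Equiv.Perm (Fin T), j = i ∘ σ)

/-- The orbit average `π^S(i) = (1/#A(i)) ∑_{j ∈ A(i)} π(j)`. -/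
noncomputable def orbitAvg (r T : ℕ) (π : (Fin T → Fin r) → ℝ) (i : Fin T → Fin r) : ℝ :=
  (∑ j ∈ cellOrbit r T i, π j) / ((cellOrbit r T i).card : ℝ)

lemma mem_cellOrbit_self (r T : ℕ) (i : Fin T → Fin r) : i ∈ cellOrbit r T i := by
  simp only [cellOrbit, Finset.mem_filter, Finset.mem_univ, true_and]
  exact ⟨1, by ext x; simp⟩

lemma cellOrbit_comp (r T : ℕ) (i : Fin T → Fin r) (σ : Equiv.Perm (Fin T)) :
    cellOrbit r T (i ∘ σ) = cellOrbit r T i := by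
  ext j
  simp only [cellOrbit, Finset.mem_filter, Finset.mem_univ, true_and]
  constructor
  · rintro ⟨τ, rfl⟩; exact ⟨τ.trans σ, by ext x; simp⟩
  · rintro ⟨τ, rfl⟩; exact ⟨τ.trans σ.symm, by ext x; simp⟩

lemma cellOrbit_eq_of_mem (r T : ℕ) {i j : Fin T → Fin r} (h : j ∈ cellOrbit r T i) :
    cellOrbit r T j = cellOrbit r T i := by
  simp only [cellOrbit, Finset.mem_filter, Finset.mem_univ, true_and] at h
  obtain ⟨σ, rfl⟩ := h
  exact cellOrbit_comp r T i σ

lemma mem_cellOrbit_symm (r T : ℕ) {i j : Fin T → Fin r} (h : j ∈ cellOrbit r T i) :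
    i ∈ cellOrbit r T j := by
  rw [cellOrbit_eq_of_mem r T h]; exact mem_cellOrbit_self r T i

lemma cellOrbit_card_pos (r T : ℕ) (i : Fin T → Fin r) : 0 < (cellOrbit r T i).card :=
  Finset.card_pos.mpr ⟨i, mem_cellOrbit_self r T i⟩

/-- Key averaging identity: sums against an orbit-invariant weight are preserved
by orbit-averaging. -/
lemma sum_orbitAvg_mul (r T : ℕ) (π h : (Fin T → Fin r) → ℝ)
    (hh : ∀ i j : Fin T → Fin r, j ∈ cellOrbit r T i → h j = h i) :
    ∑ i, orbitAvg r T π i * h i = ∑ i, π i * h i := by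
  classical
  have step1 : ∀ i : Fin T → Fin r, orbitAvg r T π i * h i
      = ∑ j ∈ cellOrbit r T i, π j * (h i / ((cellOrbit r T i).card : ℝ)) := by
    intro i
    rw [orbitAvg, div_mul_eq_mul_div, mul_div_assoc, ← Finset.sum_mul]
  calc ∑ i, orbitAvg r T π i * h i
      = ∑ i, ∑ j ∈ cellOrbit r T i, π j * (h i / ((cellOrbit r T i).card : ℝ)) :=
        Finset.sum_congr rfl fun i _ => step1 i
    _ = ∑ i : Fin T → Fin r, ∑ j : Fin T → Fin r,
          (if j ∈ cellOrbit r T i then π j * (h i / ((cellOrbit r T i).card : ℝ)) else 0) := by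
        refine Finset.sum_congr rfl fun i _ => ?_
        rw [Finset.sum_ite_mem, Finset.univ_inter]
    _ = ∑ j : Fin T → Fin r, ∑ i : Fin T → Fin r,
          (if j ∈ cellOrbit r T i then π j * (h i / ((cellOrbit r T i).card : ℝ)) else 0) :=
        Finset.sum_comm
    _ = ∑ j : Fin T → Fin r, ∑ i : Fin T → Fin r,
          (if i ∈ cellOrbit r T j then π j * (h j / ((cellOrbit r T j).card : ℝ)) else 0) := by
        refine Finset.sum_congr rfl fun j _ => Finset.sum_congr rfl fun i _ => ?_
        by_cases hc : j ∈ cellOrbit r T i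
        · have hij : i ∈ cellOrbit r T j := mem_cellOrbit_symm r T hc
          have horb : cellOrbit r T j = cellOrbit r T i := cellOrbit_eq_of_mem r T hc
          rw [if_pos hc, if_pos hij, hh i j hc, horb]
        · have hij : i ∉ cellOrbit r T j := fun hij => hc (mem_cellOrbit_symm r T hij)
          rw [if_neg hc, if_neg hij]
    _ = ∑ j, π j * h j := by
        refine Finset.sum_congr rfl fun j _ => ?_
        rw [Finset.sum_ite_mem, Finset.univ_inter, Finset.sum_const, nsmul_eq_mul]
        have hc : ((cellOrbit r T j).card : ℝ) ≠ 0 :=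
          Nat.cast_ne_zero.mpr (cellOrbit_card_pos r T j).ne'
        field_simp

/-- Theorem 2: a positive probability vector `π` satisfies complete symmetry (S) if and
only if it satisfies both the OQS[f] model and the marginal moment equality (ME) model. -/
theorem completeSymmetry_iff_OQSf_and_ME
    (r T : ℕ) (hr : 2 ≤ r) (hT : 2 ≤ T)
    (u : Fin r → ℝ) (humono : Monotone u)
    (hune : u ⟨0, by omega⟩ < u ⟨r - 1, by omega⟩)
    (f : ℝ → ℝ) (hconv : StrictConvexOn ℝ (Set.Ioi 0) f)
    (hdiff : ∀ x ∈ Set.Ioi (0 : ℝ), DifferentiableAt ℝ f x) (hf1 : f 1 = 0)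
    (π : (Fin T → Fin r) → ℝ) (hpos : ∀ i, 0 < π i) (hsum : ∑ i, π i = 1) :
    -- complete symmetry (S)
    (∀ (i : Fin T → Fin r) (σ : Equiv.Perm (Fin T)), π (i ∘ σ) = π i) ↔
      -- the OQS[f] model (with F = f′)
      ((∃ (β : Fin T → ℝ) (ψ : (Fin T → Fin r) → ℝ),
        (∀ (i : Fin T → Fin r) (σ : Equiv.Perm (Fin T)), ψ (i ∘ σ) = ψ i) ∧
        ∀ i : Fin T → Fin r,
          deriv f (π i / orbitAvg r T π i) = (∑ t, β t * u (i t)) + ψ i) ∧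
      -- and the ME model
      (∀ s t : Fin T, ∑ i, u (i s) * π i = ∑ i, u (i t) * π i)) := by
  classical
  constructor
  · -- (S) → OQS[f] ∧ ME
    intro hS
    constructor
    · refine ⟨0, fun _ => deriv f 1, fun i σ => rfl, fun i => ?_⟩
      have havg : orbitAvg r T π i = π i := by
        have hconst : ∀ j ∈ cellOrbit r T i, π j = π i := by
          intro j hj
          simp only [cellOrbit, Finset.mem_filter, Finset.mem_univ, true_and] at hj
          obtain ⟨σ, rfl⟩ := hj
          exact hS i σ
        rw [orbitAvg, Finset.sum_congr rfl hconst, Finset.sum_const, nsmul_eq_mul]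
        have hc : ((cellOrbit r T i).card : ℝ) ≠ 0 :=
          Nat.cast_ne_zero.mpr (cellOrbit_card_pos r T i).ne'
        field_simp
      rw [havg, div_self (hpos i).ne']
      simp
    · intro s t
      have he : ∀ i : Fin T → Fin r,
          u (i s) * π i = u ((i ∘ Equiv.swap s t) t) * π (i ∘ Equiv.swap s t) := by
        intro i
        rw [hS i (Equiv.swap s t)]
        simp [Equiv.swap_apply_right]
      refine Fintype.sum_equiv (Equiv.arrowCongr (Equiv.swap s t).symm (Equiv.refl (Fin r)))
        _ _ fun i => ?_
      have : (Equiv.arrowCongr (Equiv.swap s t).symm (Equiv.refl (Fin r))) i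
          = i ∘ Equiv.swap s t := by
        ext x; simp [Equiv.arrowCongr]
      rw [this]
      exact he i
  · -- OQS[f] ∧ ME → (S)
    rintro ⟨⟨β, ψ, hψ, hOQS⟩, hME⟩
    set a : (Fin T → Fin r) → ℝ := orbitAvg r T π with ha_def
    have ha_pos : ∀ i, 0 < a i := by
      intro i
      refine div_pos ?_ (Nat.cast_pos.mpr (cellOrbit_card_pos r T i))
      exact Finset.sum_pos (fun j _ => hpos j) ⟨i, mem_cellOrbit_self r T i⟩
    have ha_inv : ∀ (i : Fin T → Fin r) (σ : Equiv.Perm (Fin T)), a (i ∘ σ) = a i := by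
      intro i σ
      simp only [ha_def, orbitAvg, cellOrbit_comp]
    -- orbit-invariance in membership form
    have inv_of : ∀ (g : (Fin T → Fin r) → ℝ),
        (∀ (i : Fin T → Fin r) (σ : Equiv.Perm (Fin T)), g (i ∘ σ) = g i) →
        ∀ i j : Fin T → Fin r, j ∈ cellOrbit r T i → g j = g i := by
      intro g hg i j hj
      simp only [cellOrbit, Finset.mem_filter, Finset.mem_univ, true_and] at hj
      obtain ⟨σ, rfl⟩ := hj
      exact hg i σ
    have hsum_a : ∑ i, a i = 1 := by
      have := sum_orbitAvg_mul r T π (fun _ => 1) (fun _ _ _ => rfl)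
      simpa [hsum] using this
    -- strict monotonicity of F = deriv f on Ioi 0
    have Fmono : StrictMonoOn (deriv f) (Set.Ioi 0) := hconv.strictMonoOn_deriv hdiff
    -- B i := ∑ t, β t * u (i t); sums against weights
    have sum_mul_B : ∀ w : (Fin T → Fin r) → ℝ,
        ∑ i, w i * (∑ t, β t * u (i t)) = ∑ t, β t * (∑ i, u (i t) * w i) := by
      intro w
      calc ∑ i, w i * (∑ t, β t * u (i t))
          = ∑ i, ∑ t, w i * (β t * u (i t)) := by
            refine Finset.sum_congr rfl fun i _ => Finset.mul_sum _ _ _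
        _ = ∑ t, ∑ i, w i * (β t * u (i t)) := Finset.sum_comm
        _ = ∑ t, β t * (∑ i, u (i t) * w i) := by
            refine Finset.sum_congr rfl fun t _ => ?_
            rw [Finset.mul_sum]
            exact Finset.sum_congr rfl fun i _ => by ring
    -- marginal means for a are all equal
    have hMEa : ∀ s t : Fin T, ∑ i, u (i s) * a i = ∑ i, u (i t) * a i := by
      intro s t
      refine Fintype.sum_equiv (Equiv.arrowCongr (Equiv.swap s t).symm (Equiv.refl (Fin r)))
        _ _ fun i => ?_
      have he : (Equiv.arrowCongr (Equiv.swap s t).symm (Equiv.refl (Fin r))) i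
          = i ∘ Equiv.swap s t := by
        ext x; simp [Equiv.arrowCongr]
      rw [he, ha_inv i (Equiv.swap s t)]
      simp [Equiv.swap_apply_right]
    -- total u-mass is orbit invariant, hence marginal sums agree in total
    have hUinv : ∀ (i : Fin T → Fin r) (σ : Equiv.Perm (Fin T)),
        (∑ t, u ((i ∘ σ) t)) = ∑ t, u (i t) := by
      intro i σ
      exact Equiv.sum_comp σ (fun t => u (i t))
    set t0 : Fin T := ⟨0, by omega⟩ with ht0
    set E : ℝ := ∑ i, u (i t0) * π i with hE
    have hEa_eq_E : ∀ t : Fin T, ∑ i, u (i t) * a i = E := by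
      have htot : ∑ t, ∑ i, u (i t) * a i = ∑ t, ∑ i, u (i t) * π i := by
        rw [Finset.sum_comm, Finset.sum_comm (γ := Fin T)]
        have h1 : ∀ w : (Fin T → Fin r) → ℝ,
            ∑ i, ∑ t, u (i t) * w i = ∑ i, w i * (∑ t, u (i t)) := by
          intro w
          refine Finset.sum_congr rfl fun i _ => ?_
          rw [Finset.mul_sum]
          exact Finset.sum_congr rfl fun t _ => by ring
        rw [h1, h1]
        have := sum_orbitAvg_mul r T π (fun i => ∑ t, u (i t))
          (inv_of _ hUinv)
        exact this
      have hconst_a : ∀ t : Fin T, ∑ i, u (i t) * a i = ∑ i, u (i t0) * a i :=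
        fun t => hMEa t t0
      have hconst_p : ∀ t : Fin T, ∑ i, u (i t) * π i = E := fun t => hME t t0
      rw [Finset.sum_congr rfl (fun t _ => hconst_a t),
          Finset.sum_congr rfl (fun t _ => hconst_p t),
          Finset.sum_const, Finset.sum_const, Finset.card_univ, Fintype.card_fin,
          nsmul_eq_mul, nsmul_eq_mul] at htot
      have hTne : (T : ℝ) ≠ 0 := Nat.cast_ne_zero.mpr (by omega)
      have hbase : ∑ i, u (i t0) * a i = E := by
        have := mul_left_cancel₀ hTne htot
        exact this
      intro t
      rw [hconst_a t, hbase]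
    -- the key sum S is zero
    have hS0 : ∑ i, (π i - a i) * (deriv f (π i / a i) - deriv f 1) = 0 := by
      have expand : ∀ i : Fin T → Fin r,
          (π i - a i) * (deriv f (π i / a i) - deriv f 1)
          = (π i * (∑ t, β t * u (i t)) - a i * (∑ t, β t * u (i t)))
            + (π i * ψ i - a i * ψ i) - (π i * deriv f 1 - a i * deriv f 1) := by
        intro i
        rw [hOQS i]
        ring
      rw [Finset.sum_congr rfl (fun i _ => expand i)]
      simp only [Finset.sum_sub_distrib, Finset.sum_add_distrib]
      have hA : ∑ i, π i * (∑ t, β t * u (i t)) = ∑ i, a i * (∑ t, β t * u (i t)) := by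
        rw [sum_mul_B π, sum_mul_B a]
        refine Finset.sum_congr rfl fun t _ => ?_
        rw [hME t t0, hEa_eq_E t, hE]
      have hB : ∑ i, a i * ψ i = ∑ i, π i * ψ i :=
        sum_orbitAvg_mul r T π ψ (inv_of ψ hψ)
      have hC : ∑ i, π i * deriv f 1 = ∑ i, a i * deriv f 1 := by
        rw [← Finset.sum_mul, ← Finset.sum_mul, hsum, hsum_a]
      linarith [hA, hB, hC]
    -- each summand is nonnegative, and zero iff π i = a i
    have hterm_nonneg : ∀ i : Fin T → Fin r,
        0 ≤ (π i - a i) * (deriv f (π i / a i) - deriv f 1) := by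
      intro i
      rcases lt_trichotomy (π i) (a i) with hlt | heq | hgt
      · have hx : π i / a i < 1 := (div_lt_one (ha_pos i)).mpr hlt
        have hxpos : (0 : ℝ) < π i / a i := div_pos (hpos i) (ha_pos i)
        have hF : deriv f (π i / a i) < deriv f 1 :=
          Fmono hxpos (by norm_num) hx
        have := mul_pos_of_neg_of_neg (sub_neg.mpr hlt) (sub_neg.mpr hF)
        linarith
      · rw [heq]; simp
      · have hx : 1 < π i / a i := (one_lt_div (ha_pos i)).mpr hgt
        have hF : deriv f 1 < deriv f (π i / a i) :=
          Fmono (by norm_num) (lt_trans one_pos hx) hx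
        have := mul_pos (sub_pos.mpr hgt) (sub_pos.mpr hF)
        linarith
    have hall : ∀ i : Fin T → Fin r, π i = a i := by
      intro i
      by_contra hne
      have hzero : ∀ j ∈ Finset.univ,
          (π j - a j) * (deriv f (π j / a j) - deriv f 1) = 0 :=
        (Finset.sum_eq_zero_iff_of_nonneg (fun j _ => hterm_nonneg j)).mp hS0
      have hi := hzero i (Finset.mem_univ i)
      rcases lt_or_gt_of_ne hne with hlt | hgt
      · have hx : π i / a i < 1 := (div_lt_one (ha_pos i)).mpr hlt
        have hxpos : (0 : ℝ) < π i / a i := div_pos (hpos i) (ha_pos i)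
        have hF : deriv f (π i / a i) < deriv f 1 :=
          Fmono hxpos (by norm_num) hx
        have := mul_pos_of_neg_of_neg (sub_neg.mpr hlt) (sub_neg.mpr hF)
        linarith
      · have hx : 1 < π i / a i := (one_lt_div (ha_pos i)).mpr hgt
        have hF : deriv f 1 < deriv f (π i / a i) :=
          Fmono (by norm_num) (lt_trans one_pos hx) hx
        have := mul_pos (sub_pos.mpr hgt) (sub_pos.mpr hF)
        linarith
    intro i σ
    rw [hall (i ∘ σ), hall i, ha_inv i σ]
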